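/- Let $W \in \mathbb{R}^{n\times n}$ be symmetric, $A \in \mathbb{R}^{n\times m}$, $\zeta \ge 0$, $\nu > 0$, and set $M := W + \tfrac{1}{\nu} A A^T + \zeta I$. Assume $d^T M d \ge b_1 \|d\|^2$ for all $d \in \mathbb{R}^n$ with $b_1 > 0$. If $g \in \mathbb{R}^n$ and $t \in \mathbb{R}^n$ satisfy the first-order condition $g + M t = 0$, then $\|A^T t\|^2 \le \tfrac{2\nu}{b_1}\|g\|^2\left(1 + \tfrac{2}{b_1}\|W + \zeta I\|\right)$. -/

import Mathlib

open Matrix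
open scoped RealInnerProductSpace
open scoped Matrix.Norms.L2Operator

set_option maxHeartbeats 1000000

/-- Bound on the violation of the null-space condition by the quasi-tangential step:
if `M = W + (1/ν)AAᵀ + ζI` is uniformly positive definite with constant `b₁` and
`g + Mt = 0`, then `‖Aᵀt‖² ≤ (2ν/b₁)‖g‖²(1 + (2/b₁)‖W + ζI‖)`. -/
theorem quasi_tangential_null_space_violation_bound
    (n m : ℕ) (W : Matrix (Fin n) (Fin n) ℝ) (hW : W.IsSymm)
    (A : Matrix (Fin n) (Fin m) ℝ) (ζ ν b1 : ℝ) (hζ : 0 ≤ ζ) (hν : 0 < ν) (hb1 : 0 < b1)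
    (M : Matrix (Fin n) (Fin n) ℝ)
    (hMdef : M = W + (1 / ν) • (A * Aᵀ) + ζ • (1 : Matrix (Fin n) (Fin n) ℝ))
    (hpos : ∀ d : EuclideanSpace ℝ (Fin n), b1 * ‖d‖ ^ 2 ≤ ⟪d, toEuclideanLin M d⟫)
    (g t : EuclideanSpace ℝ (Fin n)) (hfoc : g + toEuclideanLin M t = 0) :
    ‖toEuclideanLin Aᵀ t‖ ^ 2 ≤
      (2 * ν / b1) * ‖g‖ ^ 2 *
        (1 + (2 / b1) * ‖W + ζ • (1 : Matrix (Fin n) (Fin n) ℝ)‖) := by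
  set N := ‖W + ζ • (1 : Matrix (Fin n) (Fin n) ℝ)‖ with hNdef
  have hM : toEuclideanLin M t = -g := by
    rw [eq_neg_iff_add_eq_zero, add_comm]; exact hfoc
  have hAAt : ⟪t, toEuclideanLin (A * Aᵀ) t⟫ = ‖toEuclideanLin Aᵀ t‖ ^ 2 := by
    have hcomp : toEuclideanLin (A * Aᵀ) t = toEuclideanLin A (toEuclideanLin Aᵀ t) := by
      simp [Matrix.toEuclideanLin_apply, Matrix.mulVec_mulVec]
    have hadj : (toEuclideanLin Aᵀ : EuclideanSpace ℝ (Fin n) →ₗ[ℝ] EuclideanSpace ℝ (Fin m))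
        = LinearMap.adjoint (toEuclideanLin A) := by
      simpa using Matrix.toEuclideanLin_conjTranspose_eq_adjoint A
    rw [hcomp, ← LinearMap.adjoint_inner_left, ← hadj, real_inner_self_eq_norm_sq]
  have hsplit : ⟪t, toEuclideanLin M t⟫
      = ⟪t, toEuclideanLin (W + ζ • (1 : Matrix (Fin n) (Fin n) ℝ)) t⟫
        + (1/ν) * ‖toEuclideanLin Aᵀ t‖ ^ 2 := by
    have hMeq : M = (W + ζ • (1 : Matrix (Fin n) (Fin n) ℝ)) + (1/ν) • (A * Aᵀ) := by
      rw [hMdef]; abel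
    rw [hMeq, map_add, LinearMap.add_apply, inner_add_right, _root_.map_smul,
      LinearMap.smul_apply, inner_smul_right, hAAt]
  have hop : ∀ X : Matrix (Fin n) (Fin n) ℝ, ‖toEuclideanLin X t‖ ≤ ‖X‖ * ‖t‖ := by
    intro X
    have h := Matrix.l2_opNorm_mulVec X t
    rw [Matrix.toEuclideanLin_apply]
    exact h
  have hNb : |⟪t, toEuclideanLin (W + ζ • (1 : Matrix (Fin n) (Fin n) ℝ)) t⟫| ≤ N * ‖t‖ ^ 2 := by
    calc |⟪t, toEuclideanLin (W + ζ • (1 : Matrix (Fin n) (Fin n) ℝ)) t⟫|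
        ≤ ‖t‖ * ‖toEuclideanLin (W + ζ • (1 : Matrix (Fin n) (Fin n) ℝ)) t‖ :=
          abs_real_inner_le_norm _ _
      _ ≤ ‖t‖ * (N * ‖t‖) := by gcongr; exact hop _
      _ = N * ‖t‖ ^ 2 := by ring
  have hinner : |⟪t, g⟫| ≤ ‖t‖ * ‖g‖ := abs_real_inner_le_norm _ _
  have htg : ⟪t, toEuclideanLin M t⟫ = -⟪t, g⟫ := by rw [hM, inner_neg_right]
  have ht : b1 * ‖t‖ ≤ ‖g‖ := by
    have h1 := hpos t
    rw [htg] at h1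
    rcases eq_or_lt_of_le (norm_nonneg t) with h0 | h0
    · rw [← h0]; simpa using norm_nonneg g
    · have := abs_le.mp hinner
      nlinarith
  have hNpos : 0 ≤ N := norm_nonneg _
  have h1 := hpos t
  have hmain : ‖toEuclideanLin Aᵀ t‖ ^ 2 ≤ ν * (‖t‖ * ‖g‖ + N * ‖t‖ ^ 2) := by
    have h3 := abs_le.mp hNb
    have h4 := abs_le.mp hinner
    have h5 : (1/ν) * ‖toEuclideanLin Aᵀ t‖ ^ 2
        = -⟪t, g⟫ - ⟪t, toEuclideanLin (W + ζ • (1 : Matrix (Fin n) (Fin n) ℝ)) t⟫ := by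
      rw [← htg, hsplit]; ring
    have h6 : (1/ν) * ‖toEuclideanLin Aᵀ t‖ ^ 2 ≤ ‖t‖ * ‖g‖ + N * ‖t‖ ^ 2 := by
      rw [h5]; linarith [h3.1, h4.1]
    calc ‖toEuclideanLin Aᵀ t‖ ^ 2 = ν * ((1/ν) * ‖toEuclideanLin Aᵀ t‖ ^ 2) := by
          field_simp
      _ ≤ ν * (‖t‖ * ‖g‖ + N * ‖t‖ ^ 2) := mul_le_mul_of_nonneg_left h6 hν.le
  have hg : 0 ≤ ‖g‖ := norm_nonneg g
  have htn : 0 ≤ ‖t‖ := norm_nonneg t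
  have hRHS : (2 * ν / b1) * ‖g‖ ^ 2 * (1 + (2 / b1) * N)
      = (2 * ν * b1 * ‖g‖ ^ 2 + 4 * ν * N * ‖g‖ ^ 2) / b1 ^ 2 := by
    field_simp; ring
  rw [hRHS, le_div_iff₀ (by positivity)]
  nlinarith [mul_le_mul_of_nonneg_left ht (by positivity : (0:ℝ) ≤ ν * b1 * ‖g‖),
    mul_le_mul_of_nonneg_left
      (mul_le_mul ht ht (by positivity) hg) (by positivity : (0:ℝ) ≤ ν * N),
    mul_le_mul_of_nonneg_right hmain (by positivity : (0:ℝ) ≤ b1 ^ 2),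
    mul_nonneg (mul_nonneg hν.le hNpos) (mul_nonneg hg hg),
    mul_nonneg (mul_nonneg hν.le hb1.le) (mul_nonneg hg hg)]
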